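/- arXiv:1211.2310 — 3 statements merged into one kernel-verified Lean document; each statement's English description precedes it below -/
import Mathlib

section
/- If C is a category with pushouts, then for any two 2-cospans x and y in C with s(x) = t(y) (their underlying 1-cospans agree), the composite x ⊗²₁ y defined by pushing out the apex objects over the shared middle object A⁺₁ is again a 2-cospan with the expected boundary: its 1-source equals the 1-source of y's other face and its 1-target equals the 1-target of x's other face as described by the octahedral diagram. -/
open CategoryTheory CategoryTheory.Limits

theorem twoCospan_pushout_comp {C : Type*} [Category C] [HasPushouts C]
    {A0p A0m M P Q X Y : C}
    (l : A0p ⟶ M) (r : A0m ⟶ M)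
    (ltx : A0p ⟶ P) (rtx : A0m ⟶ P) (up : P ⟶ X) (f : M ⟶ X)
    (lq : A0p ⟶ Q) (rq : A0m ⟶ Q) (uq : Q ⟶ Y) (g : M ⟶ Y)
    (hx1 : l ≫ f = ltx ≫ up) (hx2 : r ≫ f = rtx ≫ up)
    (hy1 : lq ≫ uq = l ≫ g) (hy2 : rq ≫ uq = r ≫ g) :
    lq ≫ uq ≫ pushout.inr f g = ltx ≫ up ≫ pushout.inl f g ∧
    rq ≫ uq ≫ pushout.inr f g = rtx ≫ up ≫ pushout.inl f g := by
  constructor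
  · rw [← Category.assoc, hy1, Category.assoc, ← pushout.condition, ← Category.assoc, hx1,
      Category.assoc]
  · rw [← Category.assoc, hy2, Category.assoc, ← pushout.condition, ← Category.assoc, hx2,
      Category.assoc]
end

section
/- The composition of 2-cospans over a shared 1-cospan via pushout is associative up to canonical isomorphism: for composable 2-cospans x, y, z, there is a canonical isomorphism (x ⊗²₁ y) ⊗²₁ z ≅ x ⊗²₁ (y ⊗²₁ z) induced by the universal property of the pushout. -/
/-!  STATEMENT 7: Composition of 2-cospans over a shared 1-cospan via pushout is
associative up to the canonical isomorphism induced by the universal property of the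
pushout.

At the level of apexes, for composable 2-cospans `x, y, z` with apexes `X, Y, Z`, shared
middle objects `M` (between `x` and `y`, with legs `f : M ⟶ X`, `g : M ⟶ Y`) and `N`
(between `y` and `z`, with legs `h : N ⟶ Y`, `k : N ⟶ Z`), the apex of `(x ⊗²₁ y) ⊗²₁ z`
is `pushout (h ≫ pushout.inr f g) k` while the apex of `x ⊗²₁ (y ⊗²₁ z)` is
`pushout f (g ≫ pushout.inl h k)`, and the canonical isomorphism is compatible with the
structural inclusions. -/

open CategoryTheory CategoryTheory.Limits

theorem twoCospan_pushout_assoc {C : Type*} [Category C] [HasPushouts C]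
    {M X Y N Z : C} (f : M ⟶ X) (g : M ⟶ Y) (h : N ⟶ Y) (k : N ⟶ Z) :
    ∃ e : pushout (h ≫ pushout.inr f g) k ≅ pushout f (g ≫ pushout.inl h k),
      pushout.inl f g ≫ pushout.inl (h ≫ pushout.inr f g) k ≫ e.hom =
        pushout.inl f (g ≫ pushout.inl h k) ∧
      pushout.inr (h ≫ pushout.inr f g) k ≫ e.hom =
        pushout.inr h k ≫ pushout.inr f (g ≫ pushout.inl h k) := by
  refine ⟨pushoutAssoc f g h k, inl_inl_pushoutAssoc_hom f g h k, ?_⟩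
  rw [← Iso.eq_comp_inv, Category.assoc, inr_inr_pushoutAssoc_inv]
end

section
/- The tensor product of T-graphs over a fixed globular set G is associative up to canonical isomorphism: for T-graphs X, Y, Z over G, (X ⊗ Y) ⊗ Z ≅ X ⊗ (Y ⊗ Z), where ⊗ is defined by pullback along the cartesian monad T. -/
/-!  STATEMENT 13: The tensor product of T-graphs over a fixed object `G`, defined by
pullback along a cartesian monad `T`, is associative up to canonical isomorphism:
`(X ⊗ Y) ⊗ Z ≅ X ⊗ (Y ⊗ Z)`. -/

open CategoryTheory CategoryTheory.Limits

/-- A `T`-graph over `G`: a span `T(G) ← C → G`. -/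
structure TGraph {C : Type*} [Category C] (T : Monad C) (G : C) where
  car : C
  d : car ⟶ T.obj G
  c : car ⟶ G

namespace TGraph

variable {C : Type*} [Category C] [HasPullbacks C] {T : Monad C} {G : C}

/-- The tensor `(C,d,c) ⊗ (C',d',c') = (T(C) ×_{T(G)} C', μ(G)∘T(d)∘π₀, c'∘π₁)`,
pulling back `T(c) : T(C) → T(G)` against `d' : C' → T(G)`. -/
noncomputable def tensor (X Y : TGraph T G) : TGraph T G where
  car := pullback (T.map X.c) Y.d
  d := pullback.fst (T.map X.c) Y.d ≫ T.map X.d ≫ T.μ.app G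
  c := pullback.snd (T.map X.c) Y.d ≫ Y.c

/-- The unit `T`-graph `I(G) = (G, η(G), 1_G)`. -/
def unitGraph (T : Monad C) (G : C) : TGraph T G :=
  ⟨G, T.η.app G, 𝟙 G⟩

end TGraph


/-- If `T` is cartesian (the naturality squares of `η` and `μ` are
pullbacks and `T` preserves pullbacks), the tensor of `T`-graphs over `G` is associative
up to canonical isomorphism of spans. -/
theorem tgraph_tensor_assoc {C : Type*} [Category C] [HasPullbacks C]
    (T : Monad C) (G : C)
    (hη : ∀ {X Y : C} (f : X ⟶ Y), IsPullback f (T.η.app X) (T.η.app Y) (T.map f))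
    (hμ : ∀ {X Y : C} (f : X ⟶ Y),
      IsPullback (T.map (T.map f)) (T.μ.app X) (T.μ.app Y) (T.map f))
    [PreservesLimitsOfShape WalkingCospan (T : C ⥤ C)]
    (X Y Z : TGraph T G) :
    ∃ e : ((X.tensor Y).tensor Z).car ≅ (X.tensor (Y.tensor Z)).car,
      ((X.tensor Y).tensor Z).d = e.hom ≫ (X.tensor (Y.tensor Z)).d ∧
      ((X.tensor Y).tensor Z).c = e.hom ≫ (X.tensor (Y.tensor Z)).c := by
  classical
  -- Notation
  set p0 := pullback.fst (T.map X.c) Y.d with hp0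
  set p1 := pullback.snd (T.map X.c) Y.d with hp1
  set q0 := pullback.fst (T.map Y.c) Z.d with hq0
  set q1 := pullback.snd (T.map Y.c) Z.d with hq1
  -- `T` preserves the pullback defining `X ⊗ Y`
  have hTP : IsPullback (T.map p0) (T.map p1) (T.map (T.map X.c)) (T.map Y.d) :=
    Functor.map_isPullback (T : C ⥤ C) (IsPullback.of_hasPullback (T.map X.c) Y.d)
  have hμX := hμ X.c
  -- the two outer pullbacks
  set a0 : pullback (T.map ((X.tensor Y).c)) Z.d ⟶ T.obj (pullback (T.map X.c) Y.d) :=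
    pullback.fst (T.map ((X.tensor Y).c)) Z.d with ha0
  set a1 : pullback (T.map ((X.tensor Y).c)) Z.d ⟶ Z.car :=
    pullback.snd (T.map ((X.tensor Y).c)) Z.d with ha1
  set b0 : pullback (T.map X.c) ((Y.tensor Z).d) ⟶ T.obj X.car :=
    pullback.fst (T.map X.c) ((Y.tensor Z).d) with hb0
  set b1 : pullback (T.map X.c) ((Y.tensor Z).d) ⟶ pullback (T.map Y.c) Z.d :=
    pullback.snd (T.map X.c) ((Y.tensor Z).d) with hb1
  have hAcond : a0 ≫ T.map (p1 ≫ Y.c) = a1 ≫ Z.d := pullback.condition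
  have hBcond : b0 ≫ T.map X.c = b1 ≫ (q0 ≫ T.map Y.d ≫ T.μ.app G) := pullback.condition
  have hPcond : p0 ≫ T.map X.c = p1 ≫ Y.d := pullback.condition
  have hQcond : q0 ≫ T.map Y.c = q1 ≫ Z.d := pullback.condition
  -- the forward map
  have hu : (a0 ≫ T.map p1) ≫ T.map Y.c = a1 ≫ Z.d := by
    rw [Category.assoc, ← Functor.map_comp]; exact hAcond
  set u : pullback (T.map ((X.tensor Y).c)) Z.d ⟶ pullback (T.map Y.c) Z.d :=
    pullback.lift (a0 ≫ T.map p1) a1 hu with hudef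
  have hufst : u ≫ q0 = a0 ≫ T.map p1 := pullback.lift_fst _ _ _
  have husnd : u ≫ q1 = a1 := pullback.lift_snd _ _ _
  set f : pullback (T.map ((X.tensor Y).c)) Z.d ⟶ T.obj X.car :=
    a0 ≫ T.map p0 ≫ T.μ.app X.car with hfdef
  have hw : f ≫ T.map X.c = u ≫ (q0 ≫ T.map Y.d ≫ T.μ.app G) := by
    have h1 : T.μ.app X.car ≫ T.map X.c = T.map (T.map X.c) ≫ T.μ.app G :=
      (T.μ.naturality X.c).symm
    rw [hfdef]
    slice_lhs 3 4 => rw [h1]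
    slice_lhs 2 3 => rw [← Functor.map_comp, hPcond, Functor.map_comp]
    slice_rhs 1 2 => rw [hufst]
    simp [Category.assoc]
  set hom : pullback (T.map ((X.tensor Y).c)) Z.d ⟶ pullback (T.map X.c) ((Y.tensor Z).d) :=
    pullback.lift f u hw with hhomdef
  have hhomfst : hom ≫ b0 = f := pullback.lift_fst _ _ _
  have hhomsnd : hom ≫ b1 = u := pullback.lift_snd _ _ _
  -- the backward map
  have hl : (b1 ≫ q0 ≫ T.map Y.d) ≫ T.μ.app G = b0 ≫ T.map X.c := by
    rw [hBcond]; simp [Category.assoc]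
  set l := hμX.lift (b1 ≫ q0 ≫ T.map Y.d) b0 hl with hldef
  have hlfst : l ≫ T.map (T.map X.c) = b1 ≫ q0 ≫ T.map Y.d := hμX.lift_fst _ _ _
  have hlsnd : l ≫ T.μ.app X.car = b0 := hμX.lift_snd _ _ _
  have hm : l ≫ T.map (T.map X.c) = (b1 ≫ q0) ≫ T.map Y.d := by
    rw [hlfst, Category.assoc]
  set m := hTP.lift l (b1 ≫ q0) hm with hmdef
  have hmfst : m ≫ T.map p0 = l := hTP.lift_fst _ _ _
  have hmsnd : m ≫ T.map p1 = b1 ≫ q0 := hTP.lift_snd _ _ _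
  have hinvw : m ≫ T.map (p1 ≫ Y.c) = (b1 ≫ q1) ≫ Z.d := by
    rw [Functor.map_comp, ← Category.assoc, hmsnd, Category.assoc, Category.assoc, hQcond]
  set inv : pullback (T.map X.c) ((Y.tensor Z).d) ⟶ pullback (T.map ((X.tensor Y).c)) Z.d :=
    pullback.lift m (b1 ≫ q1) hinvw with hinvdef
  have hinvfst : inv ≫ a0 = m := pullback.lift_fst _ _ _
  have hinvsnd : inv ≫ a1 = b1 ≫ q1 := pullback.lift_snd _ _ _
  -- key component identities
  have key1 : hom ≫ m = a0 := by
    apply hTP.hom_ext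
    · simp only [Category.assoc, hmfst]
      apply hμX.hom_ext
      · simp only [Category.assoc, hlfst, reassoc_of% hhomsnd, reassoc_of% hufst,
          ← Functor.map_comp, hPcond]
      · simp only [Category.assoc, hlsnd, hhomfst, hfdef]
    · simp only [Category.assoc, hmsnd, reassoc_of% hhomsnd, hufst]
  have key2 : inv ≫ u = b1 := by
    refine pullback.hom_ext (?_ : _ ≫ q0 = _ ≫ q0) (?_ : _ ≫ q1 = _ ≫ q1)
    · simp only [Category.assoc, hufst, reassoc_of% hinvfst, hmsnd]
    · simp only [Category.assoc, husnd, hinvsnd]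
  -- hom ≫ inv = 𝟙
  have h1 : hom ≫ inv = 𝟙 _ := by
    refine pullback.hom_ext (?_ : _ ≫ a0 = _ ≫ a0) (?_ : _ ≫ a1 = _ ≫ a1)
    · simp only [Category.assoc, hinvfst, key1, Category.id_comp]
    · simp only [Category.assoc, hinvsnd, reassoc_of% hhomsnd, husnd, Category.id_comp]
  -- inv ≫ hom = 𝟙
  have h2 : inv ≫ hom = 𝟙 _ := by
    refine pullback.hom_ext (?_ : _ ≫ b0 = _ ≫ b0) (?_ : _ ≫ b1 = _ ≫ b1)
    · simp only [Category.assoc, hhomfst, hfdef, reassoc_of% hinvfst, reassoc_of% hmfst,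
        hlsnd, Category.id_comp]
    · simp only [Category.assoc, hhomsnd, key2, Category.id_comp]
  refine ⟨⟨hom, inv, h1, h2⟩, ?_, ?_⟩
  · -- the `d` legs agree
    show a0 ≫ T.map ((X.tensor Y).d) ≫ T.μ.app G = hom ≫ b0 ≫ T.map X.d ≫ T.μ.app G
    have hd : (X.tensor Y).d = p0 ≫ T.map X.d ≫ T.μ.app G := rfl
    rw [hd, reassoc_of% hhomfst, hfdef]
    simp only [Functor.map_comp, Category.assoc]
    slice_rhs 3 4 => rw [← T.μ.naturality X.d]
    slice_lhs 4 5 => rw [T.assoc G]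
    simp [Category.assoc, Functor.comp_map]
  · -- the `c` legs agree
    show a1 ≫ Z.c = hom ≫ b1 ≫ q1 ≫ Z.c
    rw [reassoc_of% hhomsnd, reassoc_of% husnd]
end
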